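/- For any positive integer m, ∑_{p prime, p ∣ m} 1/p ≤ log log log m + O(1); that is, there is an absolute constant C such that for all m ≥ 16, ∑_{p ∣ m} 1/p ≤ log log log m + C. -/

import Mathlib

open Finset

/-- The set of primes up to `N`. -/
private def PP (N : ℕ) : Finset ℕ := (Finset.range (N+1)).filter Nat.Prime

private noncomputable def AA (N : ℕ) : ℝ := ∑ p ∈ PP N, Real.log p / p

private noncomputable def SS (N : ℕ) : ℝ := ∑ p ∈ PP N, 1 / (p : ℝ)

private lemma theta_le (N : ℕ) : ∑ p ∈ PP N, Real.log p ≤ N * Real.log 4 := by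
  have h1 : ∑ p ∈ PP N, Real.log p = Real.log (primorial N) := by
    rw [primorial, ← Real.log_prod]
    · push_cast; rfl
    · intro p hp
      have := (Finset.mem_filter.mp hp).2.pos
      positivity
  rw [h1]
  calc Real.log (primorial N) ≤ Real.log ((4:ℕ) ^ N) := by
        apply Real.log_le_log (by exact_mod_cast primorial_pos N)
        exact_mod_cast primorial_le_4_pow N
    _ = N * Real.log 4 := by push_cast [Real.log_pow]; ring

private lemma nu_ge {p N : ℕ} (hp : p.Prime) :
    N / p ≤ (Nat.factorial N).factorization p := by
  rw [← Nat.Prime.pow_dvd_iff_le_factorization hp (Nat.factorial_ne_zero N),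
    Nat.Prime.pow_dvd_factorial_iff hp (Nat.lt_succ_self _)]
  rcases Nat.eq_zero_or_pos (N / p) with h | h
  · simp [h]
  · have hpN : p ≤ N := by
      by_contra hc
      rw [Nat.div_eq_of_lt (by omega)] at h; omega
    have h1 : 1 ∈ Finset.Ico 1 (Nat.log p N + 1) := by
      have := Nat.log_pos hp.one_lt hpN
      simp only [Finset.mem_Ico]; omega
    calc N / p = N / p ^ 1 := by rw [pow_one]
      _ ≤ _ := Finset.single_le_sum (f := fun i => N / p ^ i) (fun i _ => Nat.zero_le _) h1

private lemma log_factorial_eq (N : ℕ) :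
    Real.log (Nat.factorial N) = ∑ p ∈ (Nat.factorial N).primeFactors,
      ((Nat.factorial N).factorization p : ℝ) * Real.log p := by
  conv_lhs => rw [← Nat.factorization_prod_pow_eq_self (Nat.factorial_ne_zero N)]
  rw [Finsupp.prod]
  push_cast
  rw [Real.log_prod]
  · apply Finset.sum_congr rfl
    intro p hp
    rw [Real.log_pow]
  · intro p hp
    have hp' : p.Prime := Nat.prime_of_mem_primeFactors (by rwa [Nat.support_factorization] at hp)
    have := hp'.pos
    positivity

private lemma sum_floor_log_le (N : ℕ) :
    ∑ p ∈ PP N, ((N / p : ℕ) : ℝ) * Real.log p ≤ Real.log (Nat.factorial N) := by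
  rw [log_factorial_eq]
  have step1 : ∑ p ∈ PP N, ((N / p : ℕ) : ℝ) * Real.log p
      ≤ ∑ p ∈ PP N, ((Nat.factorial N).factorization p : ℝ) * Real.log p := by
    apply Finset.sum_le_sum
    intro p hp
    rw [PP, Finset.mem_filter] at hp
    have h2 : (0:ℝ) ≤ Real.log p := Real.log_nonneg (by exact_mod_cast hp.2.one_lt.le)
    exact mul_le_mul_of_nonneg_right (by exact_mod_cast nu_ge hp.2) h2
  refine step1.trans ?_
  apply Finset.sum_le_sum_of_subset_of_nonneg
  · intro p hp
    rw [PP, Finset.mem_filter, Finset.mem_range] at hp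
    rw [Nat.mem_primeFactors]
    exact ⟨hp.2, (Nat.Prime.dvd_factorial hp.2).mpr (by omega), Nat.factorial_ne_zero N⟩
  · intro p hp _
    have hp' : p.Prime := Nat.prime_of_mem_primeFactors hp
    have := hp'.one_lt
    have h2 : (0:ℝ) ≤ Real.log p := Real.log_nonneg (by exact_mod_cast hp'.one_lt.le)
    positivity

private lemma AA_le (N : ℕ) (hN : 1 ≤ N) : AA N ≤ Real.log N + Real.log 4 := by
  have hN0 : (0:ℝ) < N := by exact_mod_cast hN
  have key : (N:ℝ) * AA N ≤ (N:ℝ) * Real.log N + (N:ℝ) * Real.log 4 := by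
    have h1 : (N:ℝ) * AA N = ∑ p ∈ PP N, ((N:ℝ) / p) * Real.log p := by
      rw [AA, Finset.mul_sum]
      exact Finset.sum_congr rfl fun p hp => by ring
    rw [h1]
    have h2 : ∀ p ∈ PP N, ((N:ℝ) / p) * Real.log p
        ≤ ((N / p : ℕ) : ℝ) * Real.log p + Real.log p := by
      intro p hp
      rw [PP, Finset.mem_filter] at hp
      have hpp := hp.2.pos
      have hlog : (0:ℝ) ≤ Real.log p := Real.log_nonneg (by exact_mod_cast hp.2.one_lt.le)
      have hdivle : (N:ℝ) / p ≤ ((N / p : ℕ) : ℝ) + 1 := by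
        rw [div_le_iff₀ (by exact_mod_cast hpp)]
        have h : N < (N / p + 1) * p := by
          have := Nat.div_add_mod N p
          have := Nat.mod_lt N hpp
          nlinarith
        exact_mod_cast h.le
      nlinarith [hdivle, hlog]
    calc ∑ p ∈ PP N, ((N:ℝ) / p) * Real.log p
        ≤ ∑ p ∈ PP N, (((N / p : ℕ) : ℝ) * Real.log p + Real.log p) := Finset.sum_le_sum h2
      _ = (∑ p ∈ PP N, ((N / p : ℕ) : ℝ) * Real.log p) + ∑ p ∈ PP N, Real.log p := by
          rw [Finset.sum_add_distrib]
      _ ≤ Real.log (Nat.factorial N) + (N:ℝ) * Real.log 4 := by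
          exact add_le_add (sum_floor_log_le N) (theta_le N)
      _ ≤ (N:ℝ) * Real.log N + (N:ℝ) * Real.log 4 := by
          have : (Nat.factorial N : ℝ) ≤ (N:ℝ) ^ N := by
            exact_mod_cast Nat.factorial_le_pow N
          have hf : (0:ℝ) < (Nat.factorial N : ℝ) := by
            exact_mod_cast Nat.factorial_pos N
          have := Real.log_le_log hf this
          rw [Real.log_pow] at this
          linarith
  nlinarith [key, hN0]

private noncomputable def KK : ℝ :=
  SS 2 + (Real.log 4 - AA 2) / Real.log 2 - Real.log (Real.log 2)

private lemma key_ineq {B lN lN1 : ℝ} (h0 : 0 < lN) (h1 : lN ≤ lN1) (hB : B ≤ lN) :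
    B / lN - B / lN1 ≤ Real.log lN1 - Real.log lN := by
  have h0' : 0 < lN1 := lt_of_lt_of_le h0 h1
  have hbr : 1 / lN1 ≤ 1 / lN := one_div_le_one_div_of_le h0 h1
  have e1 : B / lN - B / lN1 = B * (1 / lN - 1 / lN1) := by ring
  have e2 : B * (1 / lN - 1 / lN1) ≤ lN * (1 / lN - 1 / lN1) :=
    mul_le_mul_of_nonneg_right hB (by linarith)
  have e3 : lN * (1 / lN - 1 / lN1) = 1 - lN / lN1 := by
    field_simp
  have e4 : Real.log lN1 - Real.log lN = Real.log (lN1 / lN) :=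
    (Real.log_div (ne_of_gt h0') (ne_of_gt h0)).symm
  have e5 : 1 - (lN1 / lN)⁻¹ ≤ Real.log (lN1 / lN) :=
    Real.one_sub_inv_le_log_of_pos (by positivity)
  rw [inv_div] at e5
  linarith

private lemma PP_succ (N : ℕ) :
    PP (N+1) = if Nat.Prime (N+1) then insert (N+1) (PP N) else PP N := by
  rw [PP, PP, Finset.range_add_one, Finset.filter_insert]

private lemma mertens_aux (N : ℕ) (hN : 2 ≤ N) :
    SS N + (Real.log 4 - AA N) / Real.log N ≤ Real.log (Real.log N) + KK := by
  induction N, hN using Nat.le_induction with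
  | base =>
    rw [KK]
    norm_num
  | succ N hN ih =>
    have hN0 : (0:ℝ) < Real.log N := Real.log_pos (by exact_mod_cast hN)
    have hle : Real.log N ≤ Real.log (N+1) := by
      apply Real.log_le_log (by positivity)
      push_cast; linarith
    have hN1 : (0:ℝ) < Real.log (N+1) := lt_of_lt_of_le hN0 hle
    have hB : AA N - Real.log 4 ≤ Real.log N := by
      have := AA_le N (by omega)
      linarith
    have hkey := key_ineq hN0 hle hB
    have hNotMem : (N+1) ∉ PP N := by
      rw [PP, Finset.mem_filter, Finset.mem_range]
      push_neg
      intro h; omega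
    by_cases hp : Nat.Prime (N+1)
    · have hS : SS (N+1) = SS N + 1 / ((N:ℝ)+1) := by
        rw [SS, SS, PP_succ, if_pos hp, Finset.sum_insert hNotMem]
        push_cast; ring
      have hA : AA (N+1) = AA N + Real.log ((N:ℝ)+1) / ((N:ℝ)+1) := by
        rw [AA, AA, PP_succ, if_pos hp, Finset.sum_insert hNotMem]
        push_cast; ring
      have hNpos : (0:ℝ) < (N:ℝ)+1 := by positivity
      have hsplit : (Real.log 4 - AA (N+1)) / Real.log ((N:ℕ)+1:ℝ)
          = (Real.log 4 - AA N) / Real.log ((N:ℝ)+1) - 1 / ((N:ℝ)+1) := by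
        rw [hA]
        field_simp
        ring
      have e1 : (Real.log 4 - AA N) / Real.log ((N:ℝ)+1)
          = -((AA N - Real.log 4) / Real.log ((N:ℝ)+1)) := by ring
      have e2 : (Real.log 4 - AA N) / Real.log (N:ℝ)
          = -((AA N - Real.log 4) / Real.log (N:ℝ)) := by ring
      push_cast [hS, hsplit] at *
      linarith
    · have hS : SS (N+1) = SS N := by rw [SS, SS, PP_succ, if_neg hp]
      have hA : AA (N+1) = AA N := by rw [AA, AA, PP_succ, if_neg hp]
      have e1 : (Real.log 4 - AA N) / Real.log ((N:ℝ)+1)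
          = -((AA N - Real.log 4) / Real.log ((N:ℝ)+1)) := by ring
      have e2 : (Real.log 4 - AA N) / Real.log (N:ℝ)
          = -((AA N - Real.log 4) / Real.log (N:ℝ)) := by ring
      push_cast [hS, hA] at *
      linarith

private lemma mertens (N : ℕ) (hN : 2 ≤ N) :
    SS N ≤ Real.log (Real.log N) + (KK + 1) := by
  have h1 := mertens_aux N hN
  have hN0 : (0:ℝ) < Real.log N := Real.log_pos (by exact_mod_cast hN)
  have hB : AA N - Real.log 4 ≤ Real.log N := by
    have := AA_le N (by omega)
    linarith
  have h2 : -1 ≤ (Real.log 4 - AA N) / Real.log N := by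
    rw [le_div_iff₀ hN0]
    linarith
  linarith

theorem sum_reciprocal_prime_divisors_le :
    ∃ C : ℝ, ∀ m : ℕ, 16 ≤ m →
      (∑ p ∈ m.primeFactors, (1 : ℝ) / p) ≤ Real.log (Real.log (Real.log m)) + C := by
  refine ⟨KK + 2, fun m hm => ?_⟩
  have hm0 : (0:ℝ) < m := by positivity
  have hm16 : (16:ℝ) ≤ (m:ℝ) := by exact_mod_cast hm
  set L : ℝ := Real.log m with hLdef
  have hlog2 : (0.6931471803:ℝ) < Real.log 2 := Real.log_two_gt_d9
  have h16 : Real.log 16 = 4 * Real.log 2 := by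
    rw [show (16:ℝ) = 2^4 by norm_num, Real.log_pow]; push_cast; ring
  have hL : (2.772:ℝ) ≤ L := by
    have : Real.log 16 ≤ L := Real.log_le_log (by norm_num) hm16
    rw [h16] at this
    linarith
  have hL0 : (0:ℝ) < L := by linarith
  have he : Real.exp 1 ≤ L := by
    have := Real.exp_one_lt_d9
    linarith
  have hlogL1 : (1:ℝ) ≤ Real.log L := by
    rwa [Real.le_log_iff_exp_le hL0]
  have hlogL0 : (0:ℝ) < Real.log L := by linarith
  set T : ℕ := ⌊L⌋₊ with hTdef
  have hTL : (T:ℝ) ≤ L := Nat.floor_le hL0.le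
  have hLT1 : L < (T:ℝ) + 1 := Nat.lt_floor_add_one L
  have hT2 : 2 ≤ T := Nat.le_floor (by push_cast; linarith)
  rw [← Finset.sum_filter_add_sum_filter_not m.primeFactors (fun p => p ≤ T)]
  have hsmall : (∑ p ∈ m.primeFactors.filter (fun p => p ≤ T), (1:ℝ)/p)
      ≤ Real.log (Real.log L) + (KK + 1) := by
    have hsub : m.primeFactors.filter (fun p => p ≤ T) ⊆ PP T := by
      intro p hp
      rw [Finset.mem_filter] at hp
      rw [PP, Finset.mem_filter, Finset.mem_range]
      exact ⟨by omega, Nat.prime_of_mem_primeFactors hp.1⟩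
    have h1 : (∑ p ∈ m.primeFactors.filter (fun p => p ≤ T), (1:ℝ)/p) ≤ SS T := by
      rw [SS]
      apply Finset.sum_le_sum_of_subset_of_nonneg hsub
      intro p hp _
      positivity
    have h2 : Real.log (Real.log T) ≤ Real.log (Real.log L) := by
      have hT0 : (0:ℝ) < (T:ℝ) := by exact_mod_cast (by omega : 0 < T)
      have hlogT : (0:ℝ) < Real.log T := Real.log_pos (by exact_mod_cast (by omega : 1 < T))
      exact Real.log_le_log hlogT (Real.log_le_log hT0 hTL)
    calc _ ≤ SS T := h1
      _ ≤ Real.log (Real.log T) + (KK + 1) := mertens T hT2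
      _ ≤ _ := by linarith
  have hlarge : (∑ p ∈ m.primeFactors.filter (fun p => ¬ p ≤ T), (1:ℝ)/p) ≤ 1 := by
    set s := m.primeFactors.filter (fun p => ¬ p ≤ T) with hs
    have hps : ∀ p ∈ s, L < (p:ℝ) ∧ p.Prime := by
      intro p hp
      rw [hs, Finset.mem_filter] at hp
      have : T + 1 ≤ p := by omega
      constructor
      · calc L < (T:ℝ) + 1 := hLT1
          _ ≤ p := by exact_mod_cast this
      · exact Nat.prime_of_mem_primeFactors hp.1
    have hsumlog : (∑ p ∈ s, Real.log p) ≤ L := by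
      have hdvd : (∏ p ∈ s, p) ∣ m :=
        dvd_trans (Finset.prod_dvd_prod_of_subset _ _ _ (Finset.filter_subset _ _))
          (Nat.prod_primeFactors_dvd m)
      have hprodle : ((∏ p ∈ s, p : ℕ) : ℝ) ≤ (m:ℝ) := by
        exact_mod_cast Nat.le_of_dvd (by omega) hdvd
      have hprodpos : (0:ℝ) < ((∏ p ∈ s, p : ℕ) : ℝ) := by
        have : 0 < ∏ p ∈ s, p := Finset.prod_pos (fun p hp => (hps p hp).2.pos)
        exact_mod_cast this
      have := Real.log_le_log hprodpos hprodle
      rwa [Nat.cast_prod, Real.log_prod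
        (fun p hp => by exact_mod_cast (hps p hp).2.pos.ne')] at this
    have hterm : ∀ p ∈ s, (1:ℝ)/p ≤ Real.log p / (L * Real.log L) := by
      intro p hp
      obtain ⟨hLp, hpp⟩ := hps p hp
      have hp0 : (0:ℝ) < p := by exact_mod_cast hpp.pos
      have hlogp : Real.log L ≤ Real.log p := Real.log_le_log hL0 hLp.le
      rw [div_le_div_iff₀ hp0 (by positivity)]
      calc 1 * (L * Real.log L) = L * Real.log L := by ring
        _ ≤ (p:ℝ) * Real.log p := by
            apply mul_le_mul hLp.le hlogp hlogL0.le hp0.le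
        _ = Real.log p * (p:ℝ) := by ring
    calc (∑ p ∈ s, (1:ℝ)/p) ≤ ∑ p ∈ s, Real.log p / (L * Real.log L) :=
          Finset.sum_le_sum hterm
      _ = (∑ p ∈ s, Real.log p) / (L * Real.log L) := by rw [Finset.sum_div]
      _ ≤ L / (L * Real.log L) := by
          apply div_le_div_of_nonneg_right hsumlog (by positivity) |>.trans_eq rfl
      _ = 1 / Real.log L := by field_simp
      _ ≤ 1 := by rw [div_le_one hlogL0]; exact hlogL1
  have hRHS : Real.log (Real.log L) = Real.log (Real.log (Real.log m)) := by rw [hLdef]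
  linarith
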